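/- Let c be a positive integer and write c = q·r with r a power of 2 (r ∣ 2^∞) and q odd, (q, r) = 1. Then for integers m, n and a Dirichlet character χ mod c = χ_r χ_q (factored by CRT), the twisted Kloosterman-type sum K(m,n;c) := Σ_{d mod c, (d,c)=1} ε_d^{−k} χ(d) (c/d) e((md + n·d̄)/c) factors as K(m,n;c) = K'(n q̄, n q̄; r) · S(n r̄, n r̄; q), where S(a,b;q) = Σ_{d mod q, (d,q)=1} χ_q(d)(d/q) e((ad + b d̄)/q) and K' is the corresponding sum of modulus r. -/

import Mathlib

/-- `ε_d`: 1 if `d ≡ 1 (mod 4)` and `i` otherwise (for odd `d` this is the usual `ε_d`). -/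
noncomputable def epsFactor (d : ℕ) : ℂ := if d % 4 = 1 then 1 else Complex.I

/-- `e(a/c)` for a residue class `a` modulo `c`. -/
noncomputable def modE (c : ℕ) [NeZero c] (a : ZMod c) : ℂ :=
  Complex.exp (2 * Real.pi * Complex.I * ((a.val : ℝ) / (c : ℝ)))

/-- The twisted Kloosterman-type sum
`K(m,n;c) = Σ_{d mod c, (d,c)=1} ε_d^{−k} χ(d) (c/d) e((m d + n d̄)/c)`,
where `(c/d)` is the (extended) Kronecker symbol. -/
noncomputable def kloostermanK (k : ℤ) (c : ℕ) [NeZero c] (χ : DirichletCharacter ℂ c)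
    (m n : ZMod c) : ℂ :=
  ∑ d : (ZMod c)ˣ, epsFactor ((d : ZMod c)).val ^ (-k) * χ (d : ZMod c) *
    (jacobiSym (c : ℤ) ((d : ZMod c)).val : ℂ) * modE c (m * (d : ZMod c) + n * ((d⁻¹ : (ZMod c)ˣ) : ZMod c))

/-- The twisted Salié sum `S(a,b;q) = Σ_{d mod q, (d,q)=1} χ_q(d) (d/q) e((a d + b d̄)/q)`. -/
noncomputable def salieS (q : ℕ) [NeZero q] (χ : DirichletCharacter ℂ q) (a b : ZMod q) : ℂ :=
  ∑ d : (ZMod q)ˣ, χ (d : ZMod q) * (jacobiSym (((d : ZMod q)).val : ℤ) q : ℂ) *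
    modE q (a * (d : ZMod q) + b * ((d⁻¹ : (ZMod q)ˣ) : ZMod q))

lemma epsFactor_ne_zero (d : ℕ) : epsFactor d ≠ 0 := by
  unfold epsFactor; split <;> simp [Complex.I_ne_zero]

lemma epsFactor_mod (d r : ℕ) (h4 : 4 ∣ r) : epsFactor (d % r) = epsFactor d := by
  unfold epsFactor; rw [Nat.mod_mod_of_dvd d h4]

/-- `(q/d) = ε_d^{q-1} (d/q)` for odd `d`, `q`. -/
lemma eps_reciprocity (d q : ℕ) (hd : d % 2 = 1) (hq : q % 2 = 1) :
    ((jacobiSym q d : ℤ) : ℂ) = epsFactor d ^ ((q : ℤ) - 1) * ((jacobiSym d q : ℤ) : ℂ) := by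
  have key : ((-1:ℂ)) ^ (q / 2 * (d / 2)) = epsFactor d ^ ((q : ℤ) - 1) := by
    have hq1 : (q:ℤ) - 1 = ((2 * (q / 2) : ℕ) : ℤ) := by push_cast; omega
    rw [hq1, zpow_natCast]
    rcases Nat.even_or_odd (d / 2) with hd2 | hd2
    · have h41 : d % 4 = 1 := by rcases hd2 with ⟨m, hm⟩; omega
      rw [Even.neg_one_pow (hd2.mul_left _)]
      simp [epsFactor, h41]
    · have h43 : d % 4 = 3 := by rcases hd2 with ⟨m, hm⟩; omega
      rw [show epsFactor d = Complex.I from by simp [epsFactor, h43]]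
      conv_rhs => rw [pow_mul, Complex.I_sq]
      rcases Nat.even_or_odd (q / 2) with hq2 | hq2
      · rw [Even.neg_one_pow hq2, Even.neg_one_pow (hq2.mul_right _)]
      · rw [Odd.neg_one_pow hq2, Odd.neg_one_pow (hq2.mul hd2)]
  rw [jacobiSym.quadratic_reciprocity (Nat.odd_iff.mpr hq) (Nat.odd_iff.mpr hd)]
  push_cast
  rw [key]

lemma jacobi_pow_two_mod (α : ℕ) (hα : 2 ≤ α) (d : ℕ) (hd : d % 2 = 1) :
    jacobiSym ((2^α : ℕ) : ℤ) (d % 2^α) = jacobiSym ((2^α : ℕ) : ℤ) d := by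
  have h2 : ((2^α : ℕ) : ℤ) = (2:ℤ)^α := by push_cast; ring
  have hd' : (d % 2^α) % 2 = 1 := by
    rw [Nat.mod_mod_of_dvd d (dvd_pow_self 2 (by omega))]; exact hd
  rw [h2, jacobiSym.pow_left, jacobiSym.pow_left]
  rcases Nat.lt_or_ge α 3 with h3 | h3
  · interval_cases α
    have g1 : (2:ℤ).gcd ((d : ℕ) : ℤ) = 1 := by
      rw [show (2:ℤ) = ((2:ℕ):ℤ) by norm_num, Int.gcd_natCast_natCast]
      exact Nat.coprime_two_left.mpr (Nat.odd_iff.mpr hd)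
    have g2 : (2:ℤ).gcd ((d % 2^2 : ℕ) : ℤ) = 1 := by
      rw [show (2:ℤ) = ((2:ℕ):ℤ) by norm_num, Int.gcd_natCast_natCast]
      exact Nat.coprime_two_left.mpr (Nat.odd_iff.mpr hd')
    rw [jacobiSym.sq_one g2, jacobiSym.sq_one g1]
  · have h8 : (8:ℕ) ∣ 2^α := by
      have : (2:ℕ)^3 ∣ 2^α := pow_dvd_pow 2 h3
      simpa using this
    congr 1
    rw [jacobiSym.at_two (Nat.odd_iff.mpr hd'), jacobiSym.at_two (Nat.odd_iff.mpr hd),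
      ZMod.χ₈_nat_eq_if_mod_eight, ZMod.χ₈_nat_eq_if_mod_eight,
      Nat.mod_mod_of_dvd d h8, hd', hd]

lemma modE_intCast (c : ℕ) [NeZero c] (x : ℤ) :
    modE c ((x : ZMod c)) = Complex.exp (2 * Real.pi * Complex.I * ((x:ℂ) / (c : ℂ))) := by
  set v := ((x : ZMod c)).val with hvdef
  have hv : (v : ℤ) = x % c := ZMod.val_intCast x
  have hc0 : (c:ℂ) ≠ 0 := Nat.cast_ne_zero.mpr (NeZero.ne c)
  have hxz : x = (c:ℤ) * (x / c) + (v:ℤ) := by rw [hv]; exact (Int.mul_ediv_add_emod x c).symm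
  have hxc : (x:ℂ) = (v:ℂ) + ((x / c : ℤ):ℂ) * c := by
    rw [show (x:ℂ) = (((c:ℤ) * (x / c) + (v:ℤ) : ℤ) : ℂ) from by exact_mod_cast congrArg Int.cast hxz]
    push_cast; ring
  rw [modE, hxc]
  have harg : 2 * (Real.pi:ℂ) * Complex.I * (((v:ℂ) + ((x / c : ℤ):ℂ) * c) / c)
      = 2 * (Real.pi:ℂ) * Complex.I * ((v:ℂ) / c) + ((x / c : ℤ):ℂ) * (2 * Real.pi * Complex.I) := by
    field_simp
  rw [harg, Complex.exp_add, Complex.exp_int_mul_two_pi_mul_I, mul_one]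
  push_cast
  rw [hvdef]

lemma exp_split (q r : ℕ) (hq0 : q ≠ 0) (hr0 : r ≠ 0) (q' r' t A : ℤ)
    (hM : (q:ℤ) * q' + (r:ℤ) * r' = 1 + (q*r:ℤ) * t) :
    Complex.exp (2 * Real.pi * Complex.I * (((A * q' : ℤ):ℂ) / (r:ℂ))) *
      Complex.exp (2 * Real.pi * Complex.I * (((A * r' : ℤ):ℂ) / (q:ℂ)))
    = Complex.exp (2 * Real.pi * Complex.I * ((A:ℂ) / ((q*r : ℕ):ℂ))) := by
  have hqc : (q:ℂ) ≠ 0 := Nat.cast_ne_zero.mpr hq0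
  have hrc : (r:ℂ) ≠ 0 := Nat.cast_ne_zero.mpr hr0
  have hMc : (q:ℂ) * (q':ℂ) + (r:ℂ) * (r':ℂ) = 1 + (q:ℂ)*(r:ℂ) * (t:ℂ) := by
    exact_mod_cast congrArg (Int.cast : ℤ → ℂ) hM
  rw [← Complex.exp_add]
  have harg : 2 * (Real.pi:ℂ) * Complex.I * (((A * q' : ℤ):ℂ) / (r:ℂ)) +
      2 * (Real.pi:ℂ) * Complex.I * (((A * r' : ℤ):ℂ) / (q:ℂ))
      = 2 * (Real.pi:ℂ) * Complex.I * ((A:ℂ) / ((q*r : ℕ):ℂ)) + ((A*t : ℤ):ℂ) * (2 * Real.pi * Complex.I) := by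
    push_cast
    field_simp
    linear_combination (A:ℂ) * hMc
  rw [harg, Complex.exp_add, Complex.exp_int_mul_two_pi_mul_I, mul_one]

lemma unitsMap_coe {m n : ℕ} [NeZero m] (h : n ∣ m) (u : (ZMod m)ˣ) :
    ((ZMod.unitsMap h u : (ZMod n)ˣ) : ZMod n) = (((u : ZMod m)).val : ZMod n) := by
  rw [ZMod.unitsMap_def, Units.coe_map]
  simp [ZMod.natCast_val]

theorem kloosterman_factorization (k : ℤ) (hk : Odd k) (α q r c : ℕ)
    (hα : 2 ≤ α) (hr : r = 2 ^ α) (hq : Odd q) (hq0 : 0 < q) (hc : c = q * r)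
    [NeZero c] [NeZero r] [NeZero q]
    (χ : DirichletCharacter ℂ c) (χr : DirichletCharacter ℂ r) (χq : DirichletCharacter ℂ q)
    (hfact : ∀ d : ℤ, χ (d : ZMod c) = χr (d : ZMod r) * χq (d : ZMod q))
    (n : ℤ) :
    kloostermanK k c χ (n : ZMod c) (n : ZMod c) =
      kloostermanK (k - q + 1) r χr ((n : ZMod r) * ((q : ZMod r))⁻¹)
          ((n : ZMod r) * ((q : ZMod r))⁻¹) *
        salieS q χq ((n : ZMod q) * ((r : ZMod q))⁻¹) ((n : ZMod q) * ((r : ZMod q))⁻¹) := by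
  subst hc
  have hcop : Nat.Coprime q r := by
    rw [hr]; exact Nat.Coprime.pow_right α (Nat.coprime_two_right.mpr hq)
  have h4r : (4:ℕ) ∣ r := by
    rw [hr, show (4:ℕ) = 2^2 by norm_num]; exact pow_dvd_pow 2 hα
  have h2r : (2:ℕ) ∣ r := dvd_trans (by norm_num) h4r
  have hrdvd : r ∣ q * r := Dvd.intro_left q rfl
  have hqdvd : q ∣ q * r := Dvd.intro r rfl
  have hq2 : q % 2 = 1 := Nat.odd_iff.mp hq
  have hr0 : r ≠ 0 := NeZero.ne r
  have hqr0 : q * r ≠ 0 := NeZero.ne (q*r)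
  -- the CRT bijection on units
  set Φ : (ZMod (q*r))ˣ → (ZMod r)ˣ × (ZMod q)ˣ :=
    fun u => (ZMod.unitsMap hrdvd u, ZMod.unitsMap hqdvd u) with hΦdef
  have hbij : Function.Bijective Φ := by
    rw [Fintype.bijective_iff_injective_and_card]
    constructor
    · intro u v huv
      have h1 : (((u : ZMod (q*r))).val : ZMod r) = (((v : ZMod (q*r))).val : ZMod r) := by
        rw [← unitsMap_coe hrdvd u, ← unitsMap_coe hrdvd v]
        exact congrArg (fun p => ((p : (ZMod r)ˣ) : ZMod r)) (congrArg Prod.fst huv)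
      have h2 : (((u : ZMod (q*r))).val : ZMod q) = (((v : ZMod (q*r))).val : ZMod q) := by
        rw [← unitsMap_coe hqdvd u, ← unitsMap_coe hqdvd v]
        exact congrArg (fun p => ((p : (ZMod q)ˣ) : ZMod q)) (congrArg Prod.snd huv)
      have hm : ((u : ZMod (q*r))).val ≡ ((v : ZMod (q*r))).val [MOD q*r] :=
        (Nat.modEq_and_modEq_iff_modEq_mul hcop).mp
          ⟨(ZMod.natCast_eq_natCast_iff _ _ _).mp h2, (ZMod.natCast_eq_natCast_iff _ _ _).mp h1⟩
      have : (((u : ZMod (q*r))).val : ZMod (q*r)) = (((v : ZMod (q*r))).val : ZMod (q*r)) :=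
        (ZMod.natCast_eq_natCast_iff _ _ _).mpr hm
      rw [ZMod.natCast_zmod_val, ZMod.natCast_zmod_val] at this
      exact Units.ext this
    · rw [Fintype.card_prod, ZMod.card_units_eq_totient, ZMod.card_units_eq_totient,
        ZMod.card_units_eq_totient, Nat.totient_mul hcop]
      ring
  -- inverse data
  have hqu : IsUnit ((q : ZMod r)) := (ZMod.isUnit_iff_coprime q r).mpr hcop
  have hru : IsUnit ((r : ZMod q)) := (ZMod.isUnit_iff_coprime r q).mpr hcop.symm
  set q' : ℕ := (((q : ZMod r))⁻¹).val with hq'def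
  set r' : ℕ := (((r : ZMod q))⁻¹).val with hr'def
  have hq'cast : ((q' : ℕ) : ZMod r) = ((q : ZMod r))⁻¹ := by
    rw [hq'def, ZMod.natCast_val, ZMod.cast_id]
  have hr'cast : ((r' : ℕ) : ZMod q) = ((r : ZMod q))⁻¹ := by
    rw [hr'def, ZMod.natCast_val, ZMod.cast_id]
  have hqq' : ((q * q' : ℕ) : ZMod r) = 1 := by
    push_cast
    rw [hq'cast]; exact ZMod.mul_inv_of_unit _ hqu
  have hrr' : ((r * r' : ℕ) : ZMod q) = 1 := by
    push_cast
    rw [hr'cast]; exact ZMod.mul_inv_of_unit _ hru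
  -- q*q' + r*r' ≡ 1 mod q*r
  obtain ⟨t, ht⟩ : ∃ t : ℤ, (q:ℤ) * q' + (r:ℤ) * r' = 1 + (q*r:ℤ) * t := by
    have hmq : (q * q' + r * r') ≡ 1 [MOD q] := by
      apply (ZMod.natCast_eq_natCast_iff _ _ _).mp
      push_cast
      push_cast at hrr'
      rw [ZMod.natCast_self]
      simpa using hrr'
    have hmr : (q * q' + r * r') ≡ 1 [MOD r] := by
      apply (ZMod.natCast_eq_natCast_iff _ _ _).mp
      push_cast
      push_cast at hqq'
      rw [ZMod.natCast_self]
      simpa using hqq'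
    have hm : (q * q' + r * r') ≡ 1 [MOD q*r] :=
      (Nat.modEq_and_modEq_iff_modEq_mul hcop).mp ⟨hmq, hmr⟩
    obtain ⟨s, hs⟩ := (Nat.modEq_iff_dvd).mp hm
    exact ⟨-s, by push_cast at hs ⊢; linarith⟩
  -- unfold and reindex
  have step2 : ∑ p : (ZMod r)ˣ × (ZMod q)ˣ,
      (epsFactor ((p.1 : ZMod r)).val ^ (-(k - (q:ℤ) + 1)) * χr (p.1 : ZMod r) *
        (jacobiSym ((r:ℕ):ℤ) ((p.1 : ZMod r)).val : ℂ) *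
        modE r ((n : ZMod r) * ((q : ZMod r))⁻¹ * (p.1 : ZMod r)
          + (n : ZMod r) * ((q : ZMod r))⁻¹ * ((p.1⁻¹ : (ZMod r)ˣ) : ZMod r)))
      * (χq (p.2 : ZMod q) * (jacobiSym (((p.2 : ZMod q)).val : ℤ) q : ℂ) *
        modE q ((n : ZMod q) * ((r : ZMod q))⁻¹ * (p.2 : ZMod q)
          + (n : ZMod q) * ((r : ZMod q))⁻¹ * ((p.2⁻¹ : (ZMod q)ˣ) : ZMod q)))
      = ∑ i : (ZMod r)ˣ, ∑ j : (ZMod q)ˣ,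
      (epsFactor ((i : ZMod r)).val ^ (-(k - (q:ℤ) + 1)) * χr (i : ZMod r) *
        (jacobiSym ((r:ℕ):ℤ) ((i : ZMod r)).val : ℂ) *
        modE r ((n : ZMod r) * ((q : ZMod r))⁻¹ * (i : ZMod r)
          + (n : ZMod r) * ((q : ZMod r))⁻¹ * ((i⁻¹ : (ZMod r)ˣ) : ZMod r)))
      * (χq (j : ZMod q) * (jacobiSym (((j : ZMod q)).val : ℤ) q : ℂ) *
        modE q ((n : ZMod q) * ((r : ZMod q))⁻¹ * (j : ZMod q)
          + (n : ZMod q) * ((r : ZMod q))⁻¹ * ((j⁻¹ : (ZMod q)ˣ) : ZMod q))) :=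
    Fintype.sum_prod_type _
  rw [kloostermanK, kloostermanK, salieS, Finset.sum_mul_sum, ← step2]
  refine Fintype.sum_bijective Φ hbij _ _ (fun u => ?_)
  -- per-term identity
  set d : ℕ := ((u : ZMod (q*r))).val with hddef
  set e : ℕ := (((u⁻¹ : (ZMod (q*r))ˣ) : ZMod (q*r))).val with hedef
  have hdcop : Nat.Coprime d (q*r) := ZMod.val_coe_unit_coprime u
  have hd2 : d % 2 = 1 := by
    have : Nat.Coprime d 2 := Nat.Coprime.coprime_dvd_right (dvd_mul_of_dvd_right h2r q) hdcop
    exact Nat.odd_iff.mp (Nat.coprime_two_right.mp this)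
  -- coercions of the image units
  have hur : ((Φ u).1 : ZMod r) = (d : ZMod r) := unitsMap_coe hrdvd u
  have huq : ((Φ u).2 : ZMod q) = (d : ZMod q) := unitsMap_coe hqdvd u
  have hur' : (((Φ u).1⁻¹ : (ZMod r)ˣ) : ZMod r) = (e : ZMod r) := by
    rw [hΦdef]
    show (((ZMod.unitsMap hrdvd u)⁻¹ : (ZMod r)ˣ) : ZMod r) = _
    rw [← map_inv (ZMod.unitsMap hrdvd) u, unitsMap_coe hrdvd]
  have huq' : (((Φ u).2⁻¹ : (ZMod q)ˣ) : ZMod q) = (e : ZMod q) := by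
    rw [hΦdef]
    show (((ZMod.unitsMap hqdvd u)⁻¹ : (ZMod q)ˣ) : ZMod q) = _
    rw [← map_inv (ZMod.unitsMap hqdvd) u, unitsMap_coe hqdvd]
  -- val computations
  have hvalr : ((Φ u).1 : ZMod r).val = d % r := by rw [hur, ZMod.val_natCast]
  have hvalq : ((Φ u).2 : ZMod q).val = d % q := by rw [huq, ZMod.val_natCast]
  -- epsilon factor
  have heps : epsFactor (((Φ u).1 : ZMod r).val) = epsFactor d := by
    rw [hvalr]; exact epsFactor_mod d r h4r
  -- character
  have hchi : χ ((u : ZMod (q*r))) = χr ((d : ℕ) : ZMod r) * χq ((d : ℕ) : ZMod q) := by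
    have := hfact (d : ℤ)
    push_cast at this
    rw [hddef] at this
    rw [ZMod.natCast_zmod_val] at this
    rw [this, hddef]
  -- jacobi symbols
  have hJc : ((jacobiSym ((q*r : ℕ) : ℤ) d : ℤ) : ℂ)
      = epsFactor d ^ ((q:ℤ) - 1) * ((jacobiSym ((d % q : ℕ) : ℤ) q : ℤ) : ℂ)
        * ((jacobiSym ((r : ℕ) : ℤ) (d % r) : ℤ) : ℂ) := by
    have hmul : jacobiSym ((q*r : ℕ) : ℤ) d = jacobiSym ((q:ℕ):ℤ) d * jacobiSym ((r:ℕ):ℤ) d := by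
      rw [show ((q*r : ℕ) : ℤ) = ((q:ℕ):ℤ) * ((r:ℕ):ℤ) by push_cast; ring, jacobiSym.mul_left]
    have hJr : jacobiSym ((r : ℕ) : ℤ) (d % r) = jacobiSym ((r:ℕ):ℤ) d := by
      rw [hr] at *; exact jacobi_pow_two_mod α hα d hd2
    have hJq : jacobiSym ((d : ℕ) : ℤ) q = jacobiSym ((d % q : ℕ) : ℤ) q := by
      rw [jacobiSym.mod_left ((d:ℕ):ℤ) q]
      try congr 1
      try push_cast
      try rfl
    rw [hmul, hJr.symm, ← hJq]
    push_cast
    rw [eps_reciprocity d q hd2 hq2]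
    try push_cast
    try ring
  -- epsilon power combination
  have hepspow : epsFactor d ^ (-k) * epsFactor d ^ ((q:ℤ) - 1)
      = epsFactor d ^ (-(k - (q:ℤ) + 1)) := by
    rw [← zpow_add₀ (epsFactor_ne_zero d)]
    congr 1
    ring
  -- exponential arguments
  have hargc : (n : ZMod (q*r)) * (u : ZMod (q*r)) + (n : ZMod (q*r)) * ((u⁻¹ : (ZMod (q*r))ˣ) : ZMod (q*r))
      = (((n * (d + e) : ℤ)) : ZMod (q*r)) := by
    push_cast
    rw [hddef, hedef, ZMod.natCast_zmod_val, ZMod.natCast_zmod_val]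
    ring
  have hargr : (n : ZMod r) * ((q : ZMod r))⁻¹ * ((Φ u).1 : ZMod r)
        + (n : ZMod r) * ((q : ZMod r))⁻¹ * (((Φ u).1⁻¹ : (ZMod r)ˣ) : ZMod r)
      = (((n * (d + e) * q' : ℤ)) : ZMod r) := by
    rw [hur, hur', ← hq'cast]
    push_cast
    ring
  have hargq : (n : ZMod q) * ((r : ZMod q))⁻¹ * ((Φ u).2 : ZMod q)
        + (n : ZMod q) * ((r : ZMod q))⁻¹ * (((Φ u).2⁻¹ : (ZMod q)ˣ) : ZMod q)
      = (((n * (d + e) * r' : ℤ)) : ZMod q) := by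
    rw [huq, huq', ← hr'cast]
    push_cast
    ring
  have hexp : modE r (((n * (d + e) * q' : ℤ)) : ZMod r) * modE q (((n * (d + e) * r' : ℤ)) : ZMod q)
      = modE (q*r) (((n * (d + e) : ℤ)) : ZMod (q*r)) := by
    rw [modE_intCast, modE_intCast, modE_intCast]
    exact exp_split q r (by omega) hr0 (q' : ℤ) (r' : ℤ) t (n * (d + e)) ht
  -- put everything together
  rw [hargc, hargr, hargq, heps, hvalr, hvalq, hchi, ← hexp]
  rw [hJc]
  rw [show epsFactor d ^ (-k) * (χr ((d:ℕ) : ZMod r) * χq ((d:ℕ) : ZMod q))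
      * (epsFactor d ^ ((q:ℤ) - 1) * ((jacobiSym ((d % q : ℕ) : ℤ) q : ℤ) : ℂ)
          * ((jacobiSym ((r : ℕ) : ℤ) (d % r) : ℤ) : ℂ))
      * (modE r (((n * (d + e) * q' : ℤ)) : ZMod r) * modE q (((n * (d + e) * r' : ℤ)) : ZMod q))
      = (epsFactor d ^ (-k) * epsFactor d ^ ((q:ℤ) - 1)) * χr ((d:ℕ) : ZMod r)
        * ((jacobiSym ((r : ℕ) : ℤ) (d % r) : ℤ) : ℂ) * modE r (((n * (d + e) * q' : ℤ)) : ZMod r)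
        * (χq ((d:ℕ) : ZMod q) * ((jacobiSym ((d % q : ℕ) : ℤ) q : ℤ) : ℂ)
            * modE q (((n * (d + e) * r' : ℤ)) : ZMod q)) from by ring]
  rw [hepspow]
  rw [hur, huq]
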